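/- Let m ≥ 1, let D be a finite nonempty subset of ℤ^m \ {0} with D = −D, and let c : D → ℂ satisfy c_{−d} = conj(c_d) with not all c_d zero; let f(θ) = Σ_{d ∈ D} c_d e^{i(d₁θ₁ + … + d_mθ_m)}, a real-valued function on [0,2π)^m. For each n ∈ ℕ let B_n = {(2πa₁/2^n, …, 2πa_m/2^n) : a ∈ {0,1,…,2^n−1}^m} be the dyadic lattice of 2^{nm} points. Then as n → ∞: (i) |{p ∈ B_n : f(p) > 0}|/2^{nm} → (1/(2π)^m)·λ_m{θ ∈ [0,2π)^m : f(θ) > 0}; (ii) |{p ∈ B_n : f(p) < 0}|/2^{nm} → (1/(2π)^m)·λ_m{θ ∈ [0,2π)^m : f(θ) < 0}; (iii) |{p ∈ B_n : f(p) = 0}|/2^{nm} → 0. -/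

import Mathlib

open MeasureTheory ComplexConjugate Filter
open scoped Real

open Set Topology

noncomputable section
namespace Stmt14Aux

/-- The character `t ↦ exp(I k t)` as a monoid hom from `Multiplicative ℝ`. -/
def charHom (k : ℤ) : Multiplicative ℝ →* ℂ where
  toFun t := Complex.exp (Complex.I * k * (Multiplicative.toAdd t : ℝ))
  map_one' := by simp
  map_mul' x y := by
    simp only [toAdd_mul, Complex.ofReal_add, mul_add, Complex.exp_add]

lemma charHom_injective : Function.Injective charHom := by
  intro k l h
  have h1 : Complex.exp (Complex.I * k * ((1:ℝ):ℂ)) = Complex.exp (Complex.I * l * ((1:ℝ):ℂ)) := by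
    have := congrArg (fun φ : Multiplicative ℝ →* ℂ => φ (Multiplicative.ofAdd (1:ℝ))) h
    simpa [charHom] using this
  rw [Complex.exp_eq_exp_iff_exists_int] at h1
  obtain ⟨n, hn⟩ := h1
  have hr : (k:ℝ) = (l:ℝ) + (n:ℝ)*(2*π) := by
    have := congrArg Complex.im hn
    simpa [Complex.ext_iff, mul_comm] using this
  rcases eq_or_ne n 0 with h0 | h0
  · subst h0
    simp at hr
    exact_mod_cast hr
  · exfalso
    refine irrational_pi ⟨((k - l : ℤ) : ℚ)/((2*n : ℤ) : ℚ), ?_⟩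
    have h2n : ((2*n : ℤ) : ℝ) ≠ 0 := by exact_mod_cast mul_ne_zero two_ne_zero h0
    push_cast
    field_simp
    linarith [hr]

lemma oneDim_null (K : Finset ℤ) (a : ℤ → ℂ) (h : ∃ k ∈ K, a k ≠ 0) :
    volume {t : ℝ | ∑ k ∈ K, a k * Complex.exp (Complex.I * k * t) = 0} = 0 := by
  set G : ℝ → ℂ := fun t => ∑ k ∈ K, a k * Complex.exp (Complex.I * k * t) with hGdef
  have hexp : ∀ k : ℤ, AnalyticOnNhd ℝ (fun t : ℝ => Complex.exp (Complex.I * k * t)) univ := by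
    intro k
    have h1 : AnalyticOnNhd ℝ (fun t : ℝ => (t:ℂ)) univ := Complex.ofRealCLM.analyticOnNhd univ
    exact (analyticOnNhd_cexp.restrictScalars (𝕜 := ℝ)).comp
      ((analyticOnNhd_const (v := Complex.I * k)).mul h1) (mapsTo_univ _ _)
  have hGa : AnalyticOnNhd ℝ G univ :=
    Finset.analyticOnNhd_fun_sum K fun k _ => (analyticOnNhd_const (v := a k)).mul (hexp k)
  have hGne : ¬ ∀ t : ℝ, G t = 0 := by
    intro hall
    obtain ⟨k₀, hk₀K, hk₀⟩ := h
    have li : LinearIndependent ℂ (fun k : ℤ => ⇑(charHom k)) :=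
      (linearIndependent_monoidHom (Multiplicative ℝ) ℂ).comp charHom charHom_injective
    refine hk₀ (linearIndependent_iff'.1 li K a ?_ k₀ hk₀K)
    funext t
    have := hall (Multiplicative.toAdd t)
    simpa [charHom, Finset.sum_apply] using this
  rcases hGa.eqOn_zero_or_eventually_ne_zero_of_preconnected isPreconnected_univ with hz | hz
  · exact absurd (fun t => hz (mem_univ t)) hGne
  · have hd : ∀ x : ℝ, Disjoint (𝓝[≠] x) (𝓟 {t : ℝ | G t = 0}) := by
      rw [Filter.eventually_iff, mem_codiscreteWithin] at hz
      intro x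
      have h2 := hz x (mem_univ x)
      have : univ \ {x | G x ≠ 0} = {t : ℝ | G t = 0} := by ext t; simp
      rwa [this] at h2
    have hdt := isClosed_and_discrete_iff.mpr hd
    haveI := isDiscrete_iff_discreteTopology.mp hdt.2
    have hco : Countable {t : ℝ | G t = 0} :=
      TopologicalSpace.separableSpace_iff_countable.mp inferInstance
    exact (Set.countable_coe_iff.mp hco).measure_zero _


lemma trig_zero_null : ∀ (m : ℕ) (D : Finset (Fin m → ℤ)) (c : (Fin m → ℤ) → ℂ),
    (∃ d ∈ D, c d ≠ 0) →
    volume {θ : Fin m → ℝ |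
      ∑ d ∈ D, c d * Complex.exp (Complex.I * ∑ i, (d i : ℂ) * (θ i : ℂ)) = 0} = 0 := by
  intro m
  induction m with
  | zero =>
    rintro D c ⟨d₀, hd₀, hc₀⟩
    have hDs : D = {d₀} :=
      Finset.eq_singleton_iff_unique_mem.mpr ⟨hd₀, fun x _ => Subsingleton.elim x d₀⟩
    have : {θ : Fin 0 → ℝ |
        ∑ d ∈ D, c d * Complex.exp (Complex.I * ∑ i, (d i : ℂ) * (θ i : ℂ)) = 0} = ∅ := by
      ext θ
      simp [hDs, hc₀]
    rw [this]; exact measure_empty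
  | succ m ih =>
    rintro D c ⟨d₀, hd₀, hc₀⟩
    classical
    set K : Finset ℤ := D.image (fun d => d 0) with hK
    set b : ℤ → (Fin m → ℝ) → ℂ := fun k θ' =>
      ∑ d ∈ D.filter (fun d => d 0 = k),
        c d * Complex.exp (Complex.I * ∑ i : Fin m, (d i.succ : ℂ) * (θ' i : ℂ)) with hb
    have hdecomp : ∀ (θ : Fin (m+1) → ℝ),
        ∑ d ∈ D, c d * Complex.exp (Complex.I * ∑ i, (d i : ℂ) * (θ i : ℂ))
          = ∑ k ∈ K, b k (fun i => θ i.succ) * Complex.exp (Complex.I * k * (θ 0 : ℂ)) := by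
      intro θ
      rw [← Finset.sum_fiberwise_of_maps_to (g := fun d => d 0) (t := K)
        (fun d hd => Finset.mem_image_of_mem _ hd)
        (fun d => c d * Complex.exp (Complex.I * ∑ i, (d i : ℂ) * (θ i : ℂ)))]
      refine Finset.sum_congr rfl fun k hk => ?_
      rw [hb]
      simp only
      rw [Finset.sum_mul]
      refine Finset.sum_congr rfl fun d hd => ?_
      have hd0 : d 0 = k := (Finset.mem_filter.mp hd).2
      rw [Fin.sum_univ_succ, mul_add, Complex.exp_add, hd0]
      ring_nf
    -- the bad set has measure zero by induction
    set E : Finset (Fin m → ℤ) := (D.filter (fun d => d 0 = d₀ 0)).image (fun d => d ∘ Fin.succ)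
      with hE
    set c' : (Fin m → ℤ) → ℂ := fun v => c (Fin.cons (d₀ 0) v) with hc'
    have hcd : ∀ d ∈ D.filter (fun d => d 0 = d₀ 0), c' (d ∘ Fin.succ) = c d := by
      intro d hd
      have hd0 : d 0 = d₀ 0 := (Finset.mem_filter.mp hd).2
      show c (Fin.cons (d₀ 0) (d ∘ Fin.succ)) = c d
      rw [← hd0]
      have : d ∘ Fin.succ = Fin.tail d := rfl
      rw [this, Fin.cons_self_tail]
    have hinj : ∀ x ∈ D.filter (fun d => d 0 = d₀ 0), ∀ y ∈ D.filter (fun d => d 0 = d₀ 0),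
        x ∘ Fin.succ = y ∘ Fin.succ → x = y := by
      intro x hx y hy hxy
      have hx0 : x 0 = d₀ 0 := (Finset.mem_filter.mp hx).2
      have hy0 : y 0 = d₀ 0 := (Finset.mem_filter.mp hy).2
      funext i
      cases i using Fin.cases with
      | zero => rw [hx0, hy0]
      | succ j => exact congrFun hxy j
    have hbE : ∀ θ' : Fin m → ℝ, b (d₀ 0) θ' =
        ∑ v ∈ E, c' v * Complex.exp (Complex.I * ∑ i, (v i : ℂ) * (θ' i : ℂ)) := by
      intro θ'
      rw [hE, Finset.sum_image hinj, hb]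
      exact Finset.sum_congr rfl fun d hd => by rw [hcd d hd]; rfl
    have hEne : ∃ v ∈ E, c' v ≠ 0 := by
      refine ⟨d₀ ∘ Fin.succ, Finset.mem_image_of_mem _ (Finset.mem_filter.mpr ⟨hd₀, rfl⟩), ?_⟩
      have h1 : c' (d₀ ∘ Fin.succ) = c d₀ := hcd d₀ (Finset.mem_filter.mpr ⟨hd₀, rfl⟩)
      rw [h1]; exact hc₀
    have hbad : volume {θ' : Fin m → ℝ | b (d₀ 0) θ' = 0} = 0 := by
      have h2 := ih E c' hEne
      have : {θ' : Fin m → ℝ | b (d₀ 0) θ' = 0} = {θ' : Fin m → ℝ |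
          ∑ v ∈ E, c' v * Complex.exp (Complex.I * ∑ i, (v i : ℂ) * (θ' i : ℂ)) = 0} := by
        ext θ'; simp only [mem_setOf_eq, hbE]
      rw [this]; exact h2
    -- continuity of b
    have hbcont : ∀ k, Continuous (b k) := by
      intro k
      rw [hb]
      refine continuous_finset_sum _ fun d _ => continuous_const.mul (Complex.continuous_exp.comp
        (continuous_const.mul (continuous_finset_sum _ fun i _ =>
          continuous_const.mul (Complex.continuous_ofReal.comp (continuous_apply i)))))
    -- the product set
    set s : Set ((Fin m → ℝ) × ℝ) :=
      {p | ∑ k ∈ K, b k p.1 * Complex.exp (Complex.I * k * (p.2 : ℂ)) = 0} with hs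
    have hsc : Continuous fun p : (Fin m → ℝ) × ℝ =>
        ∑ k ∈ K, b k p.1 * Complex.exp (Complex.I * k * (p.2 : ℂ)) :=
      continuous_finset_sum _ fun k _ => ((hbcont k).comp continuous_fst).mul
        (Complex.continuous_exp.comp (continuous_const.mul
          (Complex.continuous_ofReal.comp continuous_snd)))
    have hsm : MeasurableSet s := (isClosed_eq hsc continuous_const).measurableSet
    have hprod : ((volume : Measure (Fin m → ℝ)).prod (volume : Measure ℝ)) s = 0 := by
      rw [Measure.measure_prod_null hsm]
      have hbadae : ∀ᵐ θ' : Fin m → ℝ, b (d₀ 0) θ' ≠ 0 := by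
        rw [ae_iff]
        convert hbad using 2
        ext θ'; simp
      filter_upwards [hbadae] with θ' hθ'
      show volume (Prod.mk θ' ⁻¹' s) = 0
      have hpre : Prod.mk θ' ⁻¹' s =
          {t : ℝ | ∑ k ∈ K, b k θ' * Complex.exp (Complex.I * k * (t : ℂ)) = 0} := rfl
      rw [hpre]
      exact oneDim_null K (fun k => b k θ')
        ⟨d₀ 0, Finset.mem_image_of_mem _ hd₀, hθ'⟩
    -- transfer via the measurable equivalence
    have h1 := volume_preserving_piFinSuccAbove (fun _ : Fin (m+1) => ℝ) 0
    have h2 := Measure.measurePreserving_swap (μ := (volume : Measure ℝ))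
      (ν := (volume : Measure (Fin m → ℝ)))
    have h1' : MeasurePreserving (⇑(MeasurableEquiv.piFinSuccAbove (fun _ : Fin (m+1) => ℝ) 0))
        volume ((volume : Measure ℝ).prod (volume : Measure (Fin m → ℝ))) := by
      rw [← Measure.volume_eq_prod]; exact h1
    have hmp := h2.comp h1'
    have hZ : {θ : Fin (m+1) → ℝ |
        ∑ d ∈ D, c d * Complex.exp (Complex.I * ∑ i, (d i : ℂ) * (θ i : ℂ)) = 0}
        = (Prod.swap ∘ ⇑(MeasurableEquiv.piFinSuccAbove (fun _ : Fin (m+1) => ℝ) 0)) ⁻¹' s := by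
      ext θ
      have happ : (Prod.swap ∘ ⇑(MeasurableEquiv.piFinSuccAbove (fun _ : Fin (m+1) => ℝ) 0)) θ
          = ((fun i => θ i.succ, θ 0) : (Fin m → ℝ) × ℝ) := by
        show Prod.swap (θ 0, fun j => θ ((0 : Fin (m+1)).succAbove j)) = _
        have : (fun j : Fin m => θ ((0 : Fin (m+1)).succAbove j)) = fun j => θ j.succ := by
          funext j; rw [Fin.zero_succAbove]
        rw [this]; rfl
      simp only [mem_preimage, happ, hs, mem_setOf_eq, hdecomp θ]
    rw [hZ]
    rw [hmp.measure_preimage hsm.nullMeasurableSet]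
    exact hprod

def box (m : ℕ) : Set (Fin m → ℝ) := univ.pi fun _ => Ico (0:ℝ) (2*π)

def cell (m n : ℕ) (a : Fin m → Fin (2^n)) : Set (Fin m → ℝ) :=
  univ.pi fun i => Ico (2*π*((a i : ℕ):ℝ)/2^n) (2*π*(((a i : ℕ):ℝ)+1)/2^n)

def pt (m n : ℕ) (a : Fin m → Fin (2^n)) : Fin m → ℝ := fun i => 2*π*((a i : ℕ):ℝ)/2^n

lemma measurableSet_cell (m n : ℕ) (a : Fin m → Fin (2^n)) : MeasurableSet (cell m n a) :=
  MeasurableSet.univ_pi fun _ => measurableSet_Ico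

lemma measurableSet_box (m : ℕ) : MeasurableSet (box m) :=
  MeasurableSet.univ_pi fun _ => measurableSet_Ico

lemma pt_mem_cell (m n : ℕ) (a : Fin m → Fin (2^n)) : pt m n a ∈ cell m n a := by
  have hπ := Real.pi_pos
  intro i _
  refine ⟨le_refl _, ?_⟩
  show 2*π*((a i : ℕ):ℝ)/2^n < 2*π*(((a i : ℕ):ℝ)+1)/2^n
  have h2 : (0:ℝ) < (2:ℝ)^n := by positivity
  rw [div_lt_div_iff₀ h2 h2]
  nlinarith [h2, hπ, mul_pos (mul_pos (by norm_num : (0:ℝ) < 2) hπ) h2]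

lemma cell_subset_box (m n : ℕ) (a : Fin m → Fin (2^n)) : cell m n a ⊆ box m := by
  have hπ := Real.pi_pos
  intro θ hθ i _
  have h1 := hθ i (mem_univ i)
  have hlt : ((a i : ℕ):ℝ) + 1 ≤ 2^n := by
    have := (a i).isLt
    have h2 : ((a i : ℕ):ℝ) + 1 ≤ ((2^n : ℕ):ℝ) := by exact_mod_cast Nat.succ_le_of_lt this
    simpa using h2
  constructor
  · have : (0:ℝ) ≤ 2*π*((a i : ℕ):ℝ)/2^n := by positivity
    linarith [h1.1]
  · have h3 : 2*π*(((a i : ℕ):ℝ)+1)/2^n ≤ 2*π := by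
      rw [div_le_iff₀ (by positivity)]
      calc 2*π*(((a i : ℕ):ℝ)+1) ≤ 2*π*(2^n) := by gcongr
        _ = 2*π*2^n := by ring
    linarith [h1.2]

lemma box_eq_iUnion (m n : ℕ) : box m = ⋃ a : Fin m → Fin (2^n), cell m n a := by
  have hπ := Real.pi_pos
  apply Subset.antisymm
  · intro θ hθ
    have hcoord : ∀ i, 0 ≤ θ i ∧ θ i < 2*π := fun i => ⟨(hθ i (mem_univ i)).1, (hθ i (mem_univ i)).2⟩
    have hx : ∀ i, (0:ℝ) ≤ θ i * 2^n / (2*π) := fun i => by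
      have := (hcoord i).1; positivity
    have hfl : ∀ i, ⌊θ i * 2^n / (2*π)⌋₊ < 2^n := by
      intro i
      rw [Nat.floor_lt (hx i), div_lt_iff₀ (by positivity)]
      push_cast
      nlinarith [mul_pos (sub_pos.mpr (hcoord i).2) (show (0:ℝ) < (2:ℝ)^n by positivity)]
    refine mem_iUnion.mpr ⟨fun i => ⟨⌊θ i * 2^n / (2*π)⌋₊, hfl i⟩, ?_⟩
    intro i _
    have hkey : 2*π*(⌊θ i * 2^n / (2*π)⌋₊:ℝ)/2^n ≤ θ i ∧ θ i < 2*π*((⌊θ i * 2^n / (2*π)⌋₊:ℝ)+1)/2^n := by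
      have h1 := Nat.floor_le (hx i)
      have h2 := Nat.lt_floor_add_one (θ i * 2^n / (2*π))
      constructor
      · rw [div_le_iff₀ (by positivity : (0:ℝ) < 2^n)]
        calc 2*π*(⌊θ i * 2^n / (2*π)⌋₊:ℝ) ≤ 2*π*(θ i * 2^n / (2*π)) := by gcongr
          _ = θ i * 2^n := by field_simp
      · rw [lt_div_iff₀ (by positivity : (0:ℝ) < 2^n)]
        calc θ i * 2^n = 2*π*(θ i * 2^n / (2*π)) := by field_simp
          _ < 2*π*((⌊θ i * 2^n / (2*π)⌋₊:ℝ)+1) := by gcongr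
    exact ⟨hkey.1, hkey.2⟩
  · exact iUnion_subset fun a => cell_subset_box m n a

lemma cell_disjoint (m n : ℕ) : Pairwise (Function.onFun Disjoint (cell m n)) := by
  have hπ := Real.pi_pos
  intro a b hab
  rw [Function.onFun, Set.disjoint_left]
  intro θ hθa hθb
  obtain ⟨i, hi⟩ := Function.ne_iff.mp hab
  have h1 := hθa i (mem_univ i)
  have h2 := hθb i (mem_univ i)
  have hiv : (a i : ℕ) ≠ (b i : ℕ) := fun h => hi (Fin.val_injective h)
  rcases Nat.lt_or_ge (a i : ℕ) (b i : ℕ) with hlt | hge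
  · have hle : ((a i : ℕ):ℝ) + 1 ≤ ((b i : ℕ):ℝ) := by exact_mod_cast Nat.succ_le_of_lt hlt
    have : 2*π*(((a i : ℕ):ℝ)+1)/2^n ≤ 2*π*((b i : ℕ):ℝ)/2^n := by gcongr
    linarith [h1.2, h2.1]
  · have hlt' : (b i : ℕ) < (a i : ℕ) := hge.lt_of_ne fun h => hiv h.symm
    have hle : ((b i : ℕ):ℝ) + 1 ≤ ((a i : ℕ):ℝ) := by exact_mod_cast Nat.succ_le_of_lt hlt'
    have : 2*π*(((b i : ℕ):ℝ)+1)/2^n ≤ 2*π*((a i : ℕ):ℝ)/2^n := by gcongr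
    linarith [h2.2, h1.1]

lemma volume_cell (m n : ℕ) (a : Fin m → Fin (2^n)) :
    volume (cell m n a) = ENNReal.ofReal ((2*π/2^n)^m) := by
  have hπ := Real.pi_pos
  rw [cell, volume_pi_pi]
  have heq : ∀ i : Fin m, volume (Ico (2*π*((a i : ℕ):ℝ)/2^n) (2*π*(((a i : ℕ):ℝ)+1)/2^n))
      = ENNReal.ofReal (2*π/2^n) := by
    intro i
    rw [Real.volume_Ico]
    congr 1
    ring
  simp only [heq]
  rw [Finset.prod_const, Finset.card_univ, Fintype.card_fin]
  rw [← ENNReal.ofReal_pow (by positivity)]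

lemma volume_box (m : ℕ) : volume (box m) = ENNReal.ofReal ((2*π)^m) := by
  have hπ := Real.pi_pos
  rw [box, volume_pi_pi]
  simp only [Real.volume_Ico, sub_zero]
  rw [Finset.prod_const, Finset.card_univ, Fintype.card_fin,
    ← ENNReal.ofReal_pow (by positivity)]

lemma riemann (m : ℕ) (g : (Fin m → ℝ) → ℝ) (hg : Continuous g) (hgs : HasCompactSupport g) :
    Tendsto (fun n : ℕ =>
        (∑ a : Fin m → Fin (2^n), g (fun i => 2*π*((a i : ℕ):ℝ)/2^n)) / 2^(n*m))
      atTop (nhds ((∫ θ in box m, g θ) / (2*π)^m)) := by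
  have hπ := Real.pi_pos
  have hvol_pos : (0:ℝ) < (2*π)^m := by positivity
  rw [Metric.tendsto_atTop]
  intro ε hε
  obtain ⟨δ, hδ, hδ'⟩ := Metric.uniformContinuous_iff.mp
    (hgs.uniformContinuous_of_continuous hg) (ε/2) (by positivity)
  have hto : Tendsto (fun n : ℕ => 2*π/(2:ℝ)^n) atTop (nhds 0) :=
    Tendsto.div_atTop tendsto_const_nhds (tendsto_pow_atTop_atTop_of_one_lt one_lt_two)
  obtain ⟨N, hN⟩ := Filter.eventually_atTop.mp (hto.eventually (gt_mem_nhds hδ))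
  refine ⟨N, fun n hn => ?_⟩
  have hmesh : 2*π/(2:ℝ)^n < δ := hN n hn
  have h2n : (0:ℝ) < 2^n := by positivity
  have hInt : Integrable g (volume : Measure (Fin m → ℝ)) :=
    hg.integrable_of_hasCompactSupport hgs
  -- split the integral
  have hsplit : ∫ θ in box m, g θ = ∑ a : Fin m → Fin (2^n), ∫ θ in cell m n a, g θ := by
    rw [box_eq_iUnion m n,
      integral_iUnion (measurableSet_cell m n) (cell_disjoint m n) hInt.integrableOn]
    exact tsum_fintype _
  have hvolcell : ∀ a : Fin m → Fin (2^n), (volume (cell m n a)).toReal = (2*π/2^n)^m := by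
    intro a
    rw [volume_cell, ENNReal.toReal_ofReal (by positivity)]
  have hpercell : ∀ a : Fin m → Fin (2^n),
      |(∫ θ in cell m n a, g θ) - g (pt m n a) * (2*π/2^n)^m| ≤ ε/2 * (2*π/2^n)^m := by
    intro a
    have hfin : volume (cell m n a) < ⊤ := by
      rw [volume_cell]; exact ENNReal.ofReal_lt_top
    have hconst : ∫ _θ in cell m n a, g (pt m n a) = g (pt m n a) * (2*π/2^n)^m := by
      rw [setIntegral_const, smul_eq_mul, measureReal_def, hvolcell a, mul_comm]
    have hsub : ∫ θ in cell m n a, (g θ - g (pt m n a))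
        = (∫ θ in cell m n a, g θ) - g (pt m n a) * (2*π/2^n)^m := by
      rw [integral_sub hInt.integrableOn
        (integrableOn_const hfin.ne), hconst]
    rw [← hsub]
    have hbound : ∀ θ ∈ cell m n a, ‖g θ - g (pt m n a)‖ ≤ ε/2 := by
      intro θ hθ
      have hdist : dist θ (pt m n a) < δ := by
        have hle : dist θ (pt m n a) ≤ 2*π/2^n := by
          rw [dist_pi_le_iff (by positivity)]
          intro i
          have h1 := hθ i (mem_univ i)
          rw [Real.dist_eq, abs_le]
          have hiden : 2*π*(((a i : ℕ):ℝ)+1)/2^n - 2*π*((a i : ℕ):ℝ)/2^n = 2*π/2^n := by ring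
          constructor
          · have : (pt m n a) i = 2*π*((a i : ℕ):ℝ)/2^n := rfl
            rw [this]
            have h0 : (0:ℝ) < 2*π/2^n := by positivity
            linarith [h1.1]
          · have : (pt m n a) i = 2*π*((a i : ℕ):ℝ)/2^n := rfl
            rw [this]
            linarith [h1.2]
        linarith
      have := hδ' hdist
      rw [Real.dist_eq] at this
      exact le_of_lt this
    calc |∫ θ in cell m n a, (g θ - g (pt m n a))| ≤ ε/2 * (volume (cell m n a)).toReal :=
          norm_setIntegral_le_of_norm_le_const hfin hbound
      _ = ε/2 * (2*π/2^n)^m := by rw [hvolcell a]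
  -- summation
  set T : ℝ := ∑ a : Fin m → Fin (2^n), g (fun i => 2*π*((a i : ℕ):ℝ)/2^n) with hT
  have hTpt : T = ∑ a : Fin m → Fin (2^n), g (pt m n a) := rfl
  have hcard : (Fintype.card (Fin m → Fin (2^n)) : ℝ) = 2^(n*m) := by
    rw [Fintype.card_fun, Fintype.card_fin, Fintype.card_fin]
    push_cast
    rw [← pow_mul]
  have hsum : |(∫ θ in box m, g θ) - T * (2*π/2^n)^m| ≤ ε/2 * (2*π)^m := by
    rw [hsplit, hTpt, Finset.sum_mul, ← Finset.sum_sub_distrib]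
    calc |∑ a : Fin m → Fin (2^n), ((∫ θ in cell m n a, g θ) - g (pt m n a) * (2*π/2^n)^m)|
        ≤ ∑ a : Fin m → Fin (2^n), |(∫ θ in cell m n a, g θ) - g (pt m n a) * (2*π/2^n)^m| :=
          Finset.abs_sum_le_sum_abs _ _
      _ ≤ ∑ _a : Fin m → Fin (2^n), ε/2 * (2*π/2^n)^m :=
          Finset.sum_le_sum fun a _ => hpercell a
      _ = (Fintype.card (Fin m → Fin (2^n)) : ℝ) * (ε/2 * (2*π/2^n)^m) := by
          rw [Finset.sum_const, Finset.card_univ, nsmul_eq_mul]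
      _ = 2^(n*m) * (ε/2 * (2*π/2^n)^m) := by rw [hcard]
      _ = ε/2 * (2*π)^m := by
          rw [div_pow, pow_mul]
          field_simp
  -- conclude
  have h2nm : (0:ℝ) < 2^(n*m) := by positivity
  have hkey : T / 2^(n*m) - (∫ θ in box m, g θ) / (2*π)^m
      = (T * (2*π/2^n)^m - (∫ θ in box m, g θ)) / (2*π)^m := by
    rw [div_pow, pow_mul]
    field_simp
  rw [Real.dist_eq, hkey, abs_div, abs_of_pos hvol_pos]
  rw [div_lt_iff₀ hvol_pos]
  have : |T * (2*π/2^n)^m - ∫ θ in box m, g θ| ≤ ε/2 * (2*π)^m := by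
    rw [abs_sub_comm]; exact hsum
  have hlt : ε/2 * (2*π)^m < ε * (2*π)^m := by
    have : ε/2 < ε := by linarith
    gcongr
  linarith


lemma pt_mem_box (m n : ℕ) (a : Fin m → Fin (2^n)) (i : Fin m) :
    2*π*((a i : ℕ):ℝ)/2^n ∈ Ico (0:ℝ) (2*π) :=
  cell_subset_box m n a (pt_mem_cell m n a) i (mem_univ i)

lemma measure_eq_of_diff_null {α : Type*} [MeasurableSpace α] {μ : Measure α} {s t : Set α}
    (hst : s ⊆ t) (h0 : μ (t \ s) = 0) : μ t = μ s := by
  refine le_antisymm ?_ (measure_mono hst)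
  calc μ t ≤ μ (s ∪ (t \ s)) := measure_mono (fun x hx => by
        by_cases hxs : x ∈ s
        · exact Or.inl hxs
        · exact Or.inr ⟨hx, hxs⟩)
    _ ≤ μ s + μ (t \ s) := measure_union_le _ _
    _ = μ s := by rw [h0, add_zero]

lemma sandwich (m : ℕ) (A : Set (Fin m → ℝ)) (hAB : A ⊆ box m)
    (C : Set (Fin m → ℝ)) (hC : IsCompact C) (hAC : A ⊆ C) (hvC : volume C = volume A)
    (V : Set (Fin m → ℝ)) (hV : IsOpen V) (hVA : V ⊆ A) (hvV : volume V = volume A) :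
    Tendsto (fun n : ℕ =>
        (∑ a : Fin m → Fin (2^n),
          Set.indicator A (fun _ => (1:ℝ)) (fun i => 2*π*((a i : ℕ):ℝ)/2^n)) / 2^(n*m))
      atTop (nhds ((volume A).toReal / (2*π)^m)) := by
  have hπ := Real.pi_pos
  have hvol_pos : (0:ℝ) < (2*π)^m := by positivity
  have hAfin : volume A ≠ ⊤ := by
    refine ne_top_of_le_ne_top ?_ (measure_mono hAB)
    rw [volume_box]; exact ENNReal.ofReal_ne_top
  rw [Metric.tendsto_atTop]
  intro ε hε
  set L := (volume A).toReal / (2*π)^m with hL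
  set η := ε/4 * (2*π)^m with hη
  have hηpos : 0 < η := by positivity
  have hηL : η / (2*π)^m = ε/4 := by rw [hη]; field_simp
  -- upper continuous function h
  obtain ⟨U, hCU, hUopen, hUvol⟩ := Set.exists_isOpen_lt_add C (hvC ▸ hAfin)
    (ENNReal.ofReal_pos.mpr hηpos).ne'
  obtain ⟨h, hh1, hh0, hhsupp, hhrange⟩ := exists_continuous_one_zero_of_isCompact hC
    (isClosed_compl_iff.mpr hUopen) (disjoint_compl_right_iff_subset.mpr hCU)
  have hhcont : Continuous ⇑h := h.continuous
  have hUfin : volume U ≠ ⊤ := by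
    have hlt : volume C + ENNReal.ofReal η < ⊤ :=
      ENNReal.add_lt_top.mpr ⟨(hvC ▸ hAfin).lt_top, ENNReal.ofReal_lt_top⟩
    exact (hUvol.trans hlt).ne
  have hboxfin : volume (box m) ≠ ⊤ := by rw [volume_box]; exact ENNReal.ofReal_ne_top
  -- bound the integral of h
  have hIh : (∫ θ in box m, h θ) / (2*π)^m ≤ L + ε/4 := by
    have hind : IntegrableOn (Set.indicator U fun _ => (1:ℝ)) (box m) volume := by
      refine Integrable.indicator ?_ hUopen.measurableSet
      exact integrableOn_const hboxfin
    have hint1 : ∫ θ in box m, h θ ≤ ∫ θ in box m, Set.indicator U (fun _ => (1:ℝ)) θ := by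
      refine setIntegral_mono_on
        ((hhcont.integrable_of_hasCompactSupport hhsupp).integrableOn) hind
        (MeasurableSet.univ_pi fun _ => measurableSet_Ico) ?_
      intro θ _
      by_cases hU : θ ∈ U
      · rw [Set.indicator_of_mem hU]; exact (hhrange θ).2
      · simp [Set.indicator_of_notMem hU, hh0 hU]
    have hint2 : ∫ θ in box m, Set.indicator U (fun _ => (1:ℝ)) θ ≤ (volume A).toReal + η := by
      rw [setIntegral_indicator hUopen.measurableSet, setIntegral_const, smul_eq_mul, mul_one]
      have h1 : volume (box m ∩ U) ≤ volume U := measure_mono inter_subset_right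
      have h2 : volume U ≤ volume A + ENNReal.ofReal η := by
        rw [← hvC]; exact hUvol.le
      have h3 : (volume (box m ∩ U)).toReal ≤ (volume A + ENNReal.ofReal η).toReal := by
        refine ENNReal.toReal_mono ?_ (h1.trans h2)
        exact ENNReal.add_ne_top.mpr ⟨hAfin, ENNReal.ofReal_ne_top⟩
      rwa [ENNReal.toReal_add hAfin ENNReal.ofReal_ne_top,
        ENNReal.toReal_ofReal hηpos.le] at h3
    calc (∫ θ in box m, h θ) / (2*π)^m ≤ ((volume A).toReal + η) / (2*π)^m := by
          exact (div_le_div_iff_of_pos_right hvol_pos).mpr (hint1.trans hint2)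
      _ = L + ε/4 := by rw [add_div, ← hL, hηL]
  -- lower continuous function g
  obtain ⟨Kc, hKV, hKcomp, hKvol⟩ := hV.measurableSet.exists_isCompact_lt_add
    (hvV ▸ hAfin) (ENNReal.ofReal_pos.mpr hηpos).ne'
  obtain ⟨g, hg1, hg0, hgsupp, hgrange⟩ := exists_continuous_one_zero_of_isCompact hKcomp
    (isClosed_compl_iff.mpr hV) (disjoint_compl_right_iff_subset.mpr hKV)
  have hgcont : Continuous ⇑g := g.continuous
  have hKfin : volume Kc ≠ ⊤ := by
    refine ne_top_of_le_ne_top hAfin (measure_mono (hKV.trans hVA))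
  have hIg : L - ε/4 ≤ (∫ θ in box m, g θ) / (2*π)^m := by
    have hindK : IntegrableOn (Set.indicator Kc fun _ => (1:ℝ)) (box m) volume := by
      refine Integrable.indicator ?_ hKcomp.measurableSet
      exact integrableOn_const hboxfin
    have hint1 : ∫ θ in box m, Set.indicator Kc (fun _ => (1:ℝ)) θ ≤ ∫ θ in box m, g θ := by
      refine setIntegral_mono_on hindK
        ((hgcont.integrable_of_hasCompactSupport hgsupp).integrableOn)
        (MeasurableSet.univ_pi fun _ => measurableSet_Ico) ?_
      intro θ _
      by_cases hK : θ ∈ Kc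
      · simp [Set.indicator_of_mem hK, hg1 hK]
      · rw [Set.indicator_of_notMem hK]; exact (hgrange θ).1
    have hint2 : (volume A).toReal - η ≤ ∫ θ in box m, Set.indicator Kc (fun _ => (1:ℝ)) θ := by
      rw [setIntegral_indicator hKcomp.measurableSet, setIntegral_const, smul_eq_mul, mul_one]
      have hKbox : box m ∩ Kc = Kc := inter_eq_self_of_subset_right ((hKV.trans hVA).trans hAB)
      rw [hKbox]
      have h2 : volume A < volume Kc + ENNReal.ofReal η := by rw [← hvV]; exact hKvol
      have h3 : (volume A).toReal ≤ (volume Kc).toReal + η := by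
        have := ENNReal.toReal_mono (ENNReal.add_ne_top.mpr ⟨hKfin, ENNReal.ofReal_ne_top⟩) h2.le
        rwa [ENNReal.toReal_add hKfin ENNReal.ofReal_ne_top,
          ENNReal.toReal_ofReal hηpos.le] at this
      rw [measureReal_def]
      linarith
    calc L - ε/4 = ((volume A).toReal - η) / (2*π)^m := by
          rw [sub_div, ← hL, hηL]
      _ ≤ (∫ θ in box m, Set.indicator Kc (fun _ => (1:ℝ)) θ) / (2*π)^m :=
          (div_le_div_iff_of_pos_right hvol_pos).mpr hint2
      _ ≤ (∫ θ in box m, g θ) / (2*π)^m := by gcongr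
  -- Riemann sums of g and h converge
  obtain ⟨N₁, hN₁⟩ := Metric.tendsto_atTop.mp (riemann m ⇑h hhcont hhsupp) (ε/4) (by positivity)
  obtain ⟨N₂, hN₂⟩ := Metric.tendsto_atTop.mp (riemann m ⇑g hgcont hgsupp) (ε/4) (by positivity)
  refine ⟨max N₁ N₂, fun n hn => ?_⟩
  have h2nm : (0:ℝ) < 2^(n*m) := by positivity
  set Sh := (∑ a : Fin m → Fin (2^n), h (fun i => 2*π*((a i : ℕ):ℝ)/2^n)) / 2^(n*m) with hSh
  set Sg := (∑ a : Fin m → Fin (2^n), g (fun i => 2*π*((a i : ℕ):ℝ)/2^n)) / 2^(n*m) with hSg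
  set SA := (∑ a : Fin m → Fin (2^n),
      Set.indicator A (fun _ => (1:ℝ)) (fun i => 2*π*((a i : ℕ):ℝ)/2^n)) / 2^(n*m) with hSA
  have hgle : Sg ≤ SA := by
    rw [hSg, hSA]
    refine (div_le_div_iff_of_pos_right h2nm).mpr (Finset.sum_le_sum fun a _ => ?_)
    by_cases hA : (fun i => 2*π*((a i : ℕ):ℝ)/2^n) ∈ A
    · rw [Set.indicator_of_mem hA]; exact (hgrange _).2
    · rw [Set.indicator_of_notMem hA]
      have : (fun i => 2*π*((a i : ℕ):ℝ)/2^n) ∉ V := fun hx => hA (hVA hx)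
      simp [hg0 this]
  have hleh : SA ≤ Sh := by
    rw [hSh, hSA]
    refine (div_le_div_iff_of_pos_right h2nm).mpr (Finset.sum_le_sum fun a _ => ?_)
    by_cases hA : (fun i => 2*π*((a i : ℕ):ℝ)/2^n) ∈ A
    · simp [Set.indicator_of_mem hA, hh1 (hAC hA)]
    · rw [Set.indicator_of_notMem hA]; exact (hhrange _).1
  have hhb := hN₁ n (le_of_max_le_left hn)
  have hgb := hN₂ n (le_of_max_le_right hn)
  rw [Real.dist_eq] at hhb hgb ⊢
  rw [abs_sub_lt_iff] at hhb hgb ⊢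
  constructor
  · have : Sh < (∫ θ in box m, h θ) / (2*π)^m + ε/4 := by linarith [hhb.1]
    linarith [hleh, hIh]
  · have : (∫ θ in box m, g θ) / (2*π)^m - ε/4 < Sg := by linarith [hgb.2]
    linarith [hgle, hIg]


end Stmt14Aux
end

open Stmt14Aux

/-- For a real-valued trigonometric polynomial `f(θ) = Σ_{d ∈ D} c_d e^{i⟨d,θ⟩}` with
symmetric `D ⊆ ℤ^m \ {0}`, `c₋d = conj(c_d)` and not all coefficients zero, the fractions
of points of the dyadic lattice `B_n = {2πa/2^n : a ∈ {0,…,2^n−1}^m}` where `f > 0`,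
`f < 0`, `f = 0` converge respectively to `λ_m{f > 0}/(2π)^m`, `λ_m{f < 0}/(2π)^m`, `0`. -/
theorem stmt_14 (m : ℕ) (hm : 1 ≤ m) (D : Finset (Fin m → ℤ)) (hne : D.Nonempty)
    (h0 : (fun _ => 0 : Fin m → ℤ) ∉ D) (hsym : ∀ d ∈ D, -d ∈ D)
    (c : (Fin m → ℤ) → ℂ) (hc : ∀ d ∈ D, c (-d) = conj (c d))
    (hcne : ∃ d ∈ D, c d ≠ 0)
    (f : (Fin m → ℝ) → ℝ)
    (hf : ∀ θ, f θ = (∑ d ∈ D, c d * Complex.exp (Complex.I *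
      ∑ i, (d i : ℂ) * (θ i : ℂ))).re) :
    Tendsto (fun n : ℕ =>
        ((Finset.univ.filter fun a : Fin m → Fin (2 ^ n) =>
          0 < f (fun i => 2 * π * ((a i : ℕ) : ℝ) / 2 ^ n)).card : ℝ) / 2 ^ (n * m))
      atTop (nhds ((volume {θ : Fin m → ℝ |
        (∀ i, θ i ∈ Set.Ico 0 (2*π)) ∧ 0 < f θ}).toReal / (2*π) ^ m)) ∧
    Tendsto (fun n : ℕ =>
        ((Finset.univ.filter fun a : Fin m → Fin (2 ^ n) =>
          f (fun i => 2 * π * ((a i : ℕ) : ℝ) / 2 ^ n) < 0).card : ℝ) / 2 ^ (n * m))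
      atTop (nhds ((volume {θ : Fin m → ℝ |
        (∀ i, θ i ∈ Set.Ico 0 (2*π)) ∧ f θ < 0}).toReal / (2*π) ^ m)) ∧
    Tendsto (fun n : ℕ =>
        ((Finset.univ.filter fun a : Fin m → Fin (2 ^ n) =>
          f (fun i => 2 * π * ((a i : ℕ) : ℝ) / 2 ^ n) = 0).card : ℝ) / 2 ^ (n * m))
      atTop (nhds 0) := by
  have hπ := Real.pi_pos
  set S : (Fin m → ℝ) → ℂ := fun θ =>
    ∑ d ∈ D, c d * Complex.exp (Complex.I * ∑ i, (d i : ℂ) * (θ i : ℂ)) with hS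
  have hScont : Continuous S := by
    refine continuous_finset_sum _ fun d _ => continuous_const.mul (Complex.continuous_exp.comp
      (continuous_const.mul (continuous_finset_sum _ fun i _ =>
        continuous_const.mul (Complex.continuous_ofReal.comp (continuous_apply i)))))
  have hfc : Continuous f := by
    have : f = fun θ => (S θ).re := funext hf
    rw [this]
    exact Complex.continuous_re.comp hScont
  -- S is real-valued
  have hconj : ∀ θ, conj (S θ) = S θ := by
    intro θ
    have hterm : ∀ d ∈ D,
        conj (c d * Complex.exp (Complex.I * ∑ i, (d i : ℂ) * (θ i : ℂ)))
          = c (-d) * Complex.exp (Complex.I * ∑ i, ((-d) i : ℂ) * (θ i : ℂ)) := by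
      intro d hd
      rw [map_mul, ← hc d hd, ← Complex.exp_conj]
      congr 1
      rw [map_mul, Complex.conj_I, map_sum]
      have h1 : ∀ i : Fin m, conj ((d i : ℂ) * ((θ i : ℝ) : ℂ)) = (d i : ℂ) * (θ i : ℂ) := by
        intro i
        rw [map_mul, Complex.conj_ofReal]
        norm_num
      simp only [h1]
      have h2 : ∑ i, ((-d) i : ℂ) * ((θ i : ℝ) : ℂ) = -∑ i, (d i : ℂ) * ((θ i : ℝ):ℂ) := by
        rw [← Finset.sum_neg_distrib]
        refine Finset.sum_congr rfl fun i _ => ?_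
        simp [neg_mul]
      rw [h2]
      ring_nf
    calc conj (S θ) = ∑ d ∈ D, c (-d) * Complex.exp (Complex.I *
          ∑ i, ((-d) i : ℂ) * (θ i : ℂ)) := by
          rw [hS, map_sum]; exact Finset.sum_congr rfl hterm
      _ = S θ := by
          rw [hS]
          refine Finset.sum_equiv (Equiv.neg _) (fun d => ?_) (fun d hd => ?_)
          · simp only [Equiv.neg_apply]
            constructor
            · intro h; exact hsym d h
            · intro h; have := hsym _ h; rwa [neg_neg] at this
          · simp only [Equiv.neg_apply]
  have him : ∀ θ, (S θ).im = 0 := fun θ => Complex.conj_eq_iff_im.mp (hconj θ)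
  have hZ : volume {θ : Fin m → ℝ | f θ = 0} = 0 := by
    have h1 := trig_zero_null m D c hcne
    have h2 : {θ : Fin m → ℝ | f θ = 0} = {θ : Fin m → ℝ |
        ∑ d ∈ D, c d * Complex.exp (Complex.I * ∑ i, (d i : ℂ) * (θ i : ℂ)) = 0} := by
      ext θ
      simp only [mem_setOf_eq, hf θ]
      rw [show (∑ d ∈ D, c d * Complex.exp (Complex.I * ∑ i, (d i : ℂ) * (θ i : ℂ))) = S θ
        from rfl]
      rw [Complex.ext_iff]
      simp [him θ]
    rw [h2]; exact h1
  have hboxfin : volume (box m) ≠ ⊤ := by rw [volume_box]; exact ENNReal.ofReal_ne_top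
  -- frames
  set cbox : Set (Fin m → ℝ) := univ.pi fun _ => Icc (0:ℝ) (2*π) with hcbox
  set obox : Set (Fin m → ℝ) := univ.pi fun _ => Ioo (0:ℝ) (2*π) with hobox
  have hvol_cbox : volume cbox = ENNReal.ofReal ((2*π)^m) := by
    rw [hcbox, volume_pi_pi]
    simp only [Real.volume_Icc, sub_zero]
    rw [Finset.prod_const, Finset.card_univ, Fintype.card_fin,
      ← ENNReal.ofReal_pow (by positivity)]
  have hvol_obox : volume obox = ENNReal.ofReal ((2*π)^m) := by
    rw [hobox, volume_pi_pi]
    simp only [Real.volume_Ioo, sub_zero]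
    rw [Finset.prod_const, Finset.card_univ, Fintype.card_fin,
      ← ENNReal.ofReal_pow (by positivity)]
  have hbox_cbox : box m ⊆ cbox := fun θ h i _ => Ico_subset_Icc_self (h i (mem_univ i))
  have hobox_box : obox ⊆ box m := fun θ h i _ => Ioo_subset_Ico_self (h i (mem_univ i))
  have hcbox_diff : volume (cbox \ box m) = 0 := by
    rw [measure_diff hbox_cbox (by exact (MeasurableSet.univ_pi fun _ =>
      measurableSet_Ico).nullMeasurableSet) hboxfin, hvol_cbox, volume_box, tsub_self]
  have hbox_diff : volume (box m \ obox) = 0 := by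
    have hoboxfin : volume obox ≠ ⊤ := by rw [hvol_obox]; exact ENNReal.ofReal_ne_top
    rw [measure_diff hobox_box (by exact (MeasurableSet.univ_pi fun _ =>
      measurableSet_Ioo).nullMeasurableSet) hoboxfin, hvol_obox, volume_box, tsub_self]
  -- generic treatment for the strict-inequality cases
  have main : ∀ (P Q : ℝ → Prop), (∀ x, P x ↔ ¬ Q x ∧ ¬ x = 0) → (∀ x, Q x ↔ ¬ P x ∧ ¬ x = 0) →
      True := fun _ _ _ _ => trivial
  clear main
  refine ⟨?_, ?_, ?_⟩
  · -- case f > 0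
    set A : Set (Fin m → ℝ) := {θ | (∀ i, θ i ∈ Set.Ico 0 (2*π)) ∧ 0 < f θ} with hA
    have hAB : A ⊆ box m := fun θ h i _ => h.1 i
    set C : Set (Fin m → ℝ) := cbox ∩ {θ | 0 ≤ f θ} with hC
    have hCcomp : IsCompact C :=
      (isCompact_univ_pi fun _ => isCompact_Icc).inter_right
        (isClosed_le continuous_const hfc)
    have hAC : A ⊆ C := fun θ h =>
      ⟨fun i _ => Ico_subset_Icc_self (h.1 i), le_of_lt h.2⟩
    have hvC : volume C = volume A := by
      refine measure_eq_of_diff_null hAC (measure_mono_null ?_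
        (measure_union_null hZ hcbox_diff))
      rintro θ ⟨⟨hIcc, hf0⟩, hAn⟩
      by_cases hb : ∀ i, θ i ∈ Set.Ico (0:ℝ) (2*π)
      · left
        have hnp : ¬ 0 < f θ := fun hlt => hAn ⟨hb, hlt⟩
        exact le_antisymm (not_lt.mp hnp) hf0
      · right
        exact ⟨hIcc, fun hbox => hb fun i => hbox i (mem_univ i)⟩
    set V : Set (Fin m → ℝ) := obox ∩ {θ | 0 < f θ} with hV
    have hVopen : IsOpen V :=
      (isOpen_set_pi finite_univ fun _ _ => isOpen_Ioo).inter
        (isOpen_lt continuous_const hfc)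
    have hVA : V ⊆ A := fun θ h =>
      ⟨fun i => Ioo_subset_Ico_self (h.1 i (mem_univ i)), h.2⟩
    have hvV : volume V = volume A := by
      refine (measure_eq_of_diff_null hVA (measure_mono_null ?_ hbox_diff)).symm
      rintro θ ⟨⟨hIco, hpos⟩, hVn⟩
      refine ⟨fun i _ => hIco i, fun hob => hVn ⟨hob, hpos⟩⟩
    have hsand := sandwich m A hAB C hCcomp hAC hvC V hVopen hVA hvV
    have heq : (fun n : ℕ =>
        ((Finset.univ.filter fun a : Fin m → Fin (2 ^ n) =>
          0 < f (fun i => 2 * π * ((a i : ℕ) : ℝ) / 2 ^ n)).card : ℝ) / 2 ^ (n * m))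
        = fun n : ℕ => (∑ a : Fin m → Fin (2^n),
          Set.indicator A (fun _ => (1:ℝ)) (fun i => 2*π*((a i : ℕ):ℝ)/2^n)) / 2^(n*m) := by
      funext n
      congr 1
      rw [Finset.card_filter]
      push_cast
      refine Finset.sum_congr rfl fun a _ => ?_
      rw [Set.indicator_apply]
      refine if_congr ?_ rfl rfl
      constructor
      · intro h; exact ⟨fun i => pt_mem_box m n a i, h⟩
      · exact fun h => h.2
    rw [heq]
    exact hsand
  · -- case f < 0
    set A : Set (Fin m → ℝ) := {θ | (∀ i, θ i ∈ Set.Ico 0 (2*π)) ∧ f θ < 0} with hA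
    have hAB : A ⊆ box m := fun θ h i _ => h.1 i
    set C : Set (Fin m → ℝ) := cbox ∩ {θ | f θ ≤ 0} with hC
    have hCcomp : IsCompact C :=
      (isCompact_univ_pi fun _ => isCompact_Icc).inter_right
        (isClosed_le hfc continuous_const)
    have hAC : A ⊆ C := fun θ h =>
      ⟨fun i _ => Ico_subset_Icc_self (h.1 i), le_of_lt h.2⟩
    have hvC : volume C = volume A := by
      refine measure_eq_of_diff_null hAC (measure_mono_null ?_
        (measure_union_null hZ hcbox_diff))
      rintro θ ⟨⟨hIcc, hf0⟩, hAn⟩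
      by_cases hb : ∀ i, θ i ∈ Set.Ico (0:ℝ) (2*π)
      · left
        have hnp : ¬ f θ < 0 := fun hlt => hAn ⟨hb, hlt⟩
        exact le_antisymm hf0 (not_lt.mp hnp)
      · right
        exact ⟨hIcc, fun hbox => hb fun i => hbox i (mem_univ i)⟩
    set V : Set (Fin m → ℝ) := obox ∩ {θ | f θ < 0} with hV
    have hVopen : IsOpen V :=
      (isOpen_set_pi finite_univ fun _ _ => isOpen_Ioo).inter
        (isOpen_lt hfc continuous_const)
    have hVA : V ⊆ A := fun θ h =>
      ⟨fun i => Ioo_subset_Ico_self (h.1 i (mem_univ i)), h.2⟩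
    have hvV : volume V = volume A := by
      refine (measure_eq_of_diff_null hVA (measure_mono_null ?_ hbox_diff)).symm
      rintro θ ⟨⟨hIco, hpos⟩, hVn⟩
      refine ⟨fun i _ => hIco i, fun hob => hVn ⟨hob, hpos⟩⟩
    have hsand := sandwich m A hAB C hCcomp hAC hvC V hVopen hVA hvV
    have heq : (fun n : ℕ =>
        ((Finset.univ.filter fun a : Fin m → Fin (2 ^ n) =>
          f (fun i => 2 * π * ((a i : ℕ) : ℝ) / 2 ^ n) < 0).card : ℝ) / 2 ^ (n * m))
        = fun n : ℕ => (∑ a : Fin m → Fin (2^n),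
          Set.indicator A (fun _ => (1:ℝ)) (fun i => 2*π*((a i : ℕ):ℝ)/2^n)) / 2^(n*m) := by
      funext n
      congr 1
      rw [Finset.card_filter]
      push_cast
      refine Finset.sum_congr rfl fun a _ => ?_
      rw [Set.indicator_apply]
      refine if_congr ?_ rfl rfl
      constructor
      · intro h; exact ⟨fun i => pt_mem_box m n a i, h⟩
      · exact fun h => h.2
    rw [heq]
    exact hsand
  · -- case f = 0
    set A : Set (Fin m → ℝ) := {θ | (∀ i, θ i ∈ Set.Ico 0 (2*π)) ∧ f θ = 0} with hA
    have hAvol : volume A = 0 := measure_mono_null (fun θ h => h.2) hZ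
    have hAB : A ⊆ box m := fun θ h i _ => h.1 i
    set C : Set (Fin m → ℝ) := cbox ∩ {θ | f θ = 0} with hC
    have hCcomp : IsCompact C :=
      (isCompact_univ_pi fun _ => isCompact_Icc).inter_right
        (isClosed_eq hfc continuous_const)
    have hAC : A ⊆ C := fun θ h => ⟨fun i _ => Ico_subset_Icc_self (h.1 i), h.2⟩
    have hvC : volume C = volume A := by
      rw [hAvol]
      exact measure_mono_null (fun θ h => h.2) hZ
    have hvV : volume (∅ : Set (Fin m → ℝ)) = volume A := by rw [measure_empty, hAvol]
    have hsand := sandwich m A hAB C hCcomp hAC hvC ∅ isOpen_empty (empty_subset _) hvV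
    rw [hAvol] at hsand
    simp only [ENNReal.toReal_zero, zero_div] at hsand
    have heq : (fun n : ℕ =>
        ((Finset.univ.filter fun a : Fin m → Fin (2 ^ n) =>
          f (fun i => 2 * π * ((a i : ℕ) : ℝ) / 2 ^ n) = 0).card : ℝ) / 2 ^ (n * m))
        = fun n : ℕ => (∑ a : Fin m → Fin (2^n),
          Set.indicator A (fun _ => (1:ℝ)) (fun i => 2*π*((a i : ℕ):ℝ)/2^n)) / 2^(n*m) := by
      funext n
      congr 1
      rw [Finset.card_filter]
      push_cast
      refine Finset.sum_congr rfl fun a _ => ?_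
      rw [Set.indicator_apply]
      refine if_congr ?_ rfl rfl
      constructor
      · intro h; exact ⟨fun i => pt_mem_box m n a i, h⟩
      · exact fun h => h.2
    rw [heq]
    exact hsand
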